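/- Let V be a finite set with |V| = n ≥ 2, let f ≥ 2 be an integer, let c > 0 be a real number, let F ⊆ V with |F| ≤ f, and let N₁, …, N_k ⊆ V be sets with k ≤ n and |N_j| ≥ c·f·ln n for every j ∈ {1,…,k}. Let S ⊆ V be a random subset formed by including each element of V independently with probability 1/f. Then the probability that S ∩ F = ∅ and simultaneously S ∩ N_j ≠ ∅ for every j ∈ {1,…,k} is at least 1/4 − n^{1−c}. -/

import Mathlib

open scoped Classical


lemma sum_pow_powerset {α : Type*} [DecidableEq α] (B : Finset α) (x y : ℝ) :
    ∑ t ∈ B.powerset, x ^ t.card * y ^ (B.card - t.card) = (x + y) ^ B.card := by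
  rw [← Finset.prod_const, Finset.prod_add]
  apply Finset.sum_congr rfl
  intro t ht
  rw [Finset.prod_const, Finset.prod_const, Finset.card_sdiff_of_subset (Finset.mem_powerset.mp ht)]

lemma sum_avoid {V : Type} [Fintype V] [DecidableEq V] {n : ℕ} (hn : Fintype.card V = n)
    (x : ℝ) (A : Finset V) :
    ∑ S ∈ Finset.univ.filter (fun S : Finset V => S ∩ A = ∅),
      x ^ S.card * (1 - x) ^ (n - S.card) = (1 - x) ^ A.card := by
  have hfilt : Finset.univ.filter (fun S : Finset V => S ∩ A = ∅) = Aᶜ.powerset := by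
    ext S
    simp [Finset.mem_powerset, Finset.subset_compl_comm,
      ← Finset.disjoint_iff_inter_eq_empty, Finset.disjoint_left, Finset.subset_iff]
  rw [hfilt]
  have hcA : A.card ≤ n := hn ▸ Finset.card_le_univ A
  have hcompl : Aᶜ.card = n - A.card := by rw [Finset.card_compl, hn]
  have : ∀ S ∈ Aᶜ.powerset, x ^ S.card * (1 - x) ^ (n - S.card)
      = (x ^ S.card * (1 - x) ^ (Aᶜ.card - S.card)) * (1 - x) ^ A.card := by
    intro S hS
    have hS' : S.card ≤ Aᶜ.card := Finset.card_le_card (Finset.mem_powerset.mp hS)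
    rw [mul_assoc, ← pow_add]
    congr 2
    omega
  rw [Finset.sum_congr rfl this, ← Finset.sum_mul, sum_pow_powerset]
  ring_nf

-- (1 - 1/f)^f ≥ 1/4 for f ≥ 2
lemma quarter_bound (f : ℕ) (hf : 2 ≤ f) : (1:ℝ)/4 ≤ (1 - 1/(f:ℝ)) ^ f := by
  rcases le_or_gt f 3 with h3 | h4
  · interval_cases f <;> norm_num
  · have h4' : (4:ℝ) ≤ (f:ℝ) := by exact_mod_cast h4
    set r : ℝ := (f : ℝ) with hr
    have hr1 : (1:ℝ) < r - 1 := by linarith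
    have hrpos : (0:ℝ) < r := by linarith
    have hexp1 : r / (r-1) ≤ Real.exp (1/(r-1)) := by
      have := Real.add_one_le_exp (1/(r-1))
      have : 1 + 1/(r-1) ≤ Real.exp (1/(r-1)) := by linarith
      have heq : r/(r-1) = 1 + 1/(r-1) := by field_simp; ring
      linarith [heq ▸ this]
    have hq : Real.exp (-(1/(r-1))) ≤ 1 - 1/r := by
      rw [Real.exp_neg]
      have hpos : (0:ℝ) < r/(r-1) := by positivity
      have h1 : (Real.exp (1/(r-1)))⁻¹ ≤ (r/(r-1))⁻¹ :=
        inv_anti₀ hpos hexp1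
      have h2 : (r/(r-1))⁻¹ = 1 - 1/r := by field_simp
      linarith [h2 ▸ h1]
    have hqpow : Real.exp (-(1/(r-1))) ^ f ≤ (1 - 1/r) ^ f :=
      pow_le_pow_left₀ (Real.exp_nonneg _) hq f
    have hexpow : Real.exp (-(1/(r-1))) ^ f = Real.exp (-(r/(r-1))) := by
      rw [← Real.exp_nat_mul]
      congr 1
      field_simp
      rw [hr]
    have hfrac : r/(r-1) ≤ 4/3 := by
      rw [div_le_div_iff₀ (by linarith) (by norm_num)]
      linarith
    have hmono : Real.exp (-(4/3)) ≤ Real.exp (-(r/(r-1))) :=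
      Real.exp_le_exp.mpr (by linarith)
    have hqb : Real.exp (4/3) ≤ 4 := by
      have hcube : Real.exp (4/3) ^ 3 = Real.exp 4 := by
        rw [← Real.exp_nat_mul]; norm_num
      have h4e : Real.exp 4 < 64 := by
        have h1 : Real.exp 4 = Real.exp 1 ^ 4 := by rw [← Real.exp_nat_mul]; norm_num
        have he := Real.exp_one_lt_d9
        have hep := Real.exp_pos 1
        have h2 : Real.exp 1 ^ 2 < 2.7182818286 ^ 2 := by nlinarith
        have h3 : Real.exp 1 ^ 4 = (Real.exp 1 ^ 2) ^ 2 := by ring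
        rw [h1, h3]
        nlinarith [pow_pos hep 2]
      have : Real.exp (4/3) ^ 3 < 4 ^ 3 := by rw [hcube]; norm_num; linarith
      exact le_of_lt (lt_of_pow_lt_pow_left₀ 3 (by norm_num) this)
    have hq4 : (1:ℝ)/4 ≤ Real.exp (-(4/3)) := by
      rw [Real.exp_neg, ← one_div]
      exact one_div_le_one_div_of_le (Real.exp_pos _) hqb
    calc (1:ℝ)/4 ≤ Real.exp (-(4/3)) := hq4
      _ ≤ Real.exp (-(r/(r-1))) := hmono
      _ = Real.exp (-(1/(r-1))) ^ f := hexpow.symm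
      _ ≤ (1 - 1/r) ^ f := hqpow

/-- A random subset `S ⊆ V` including each vertex
independently with probability `1/f` (the probability of an event is the sum
of `(1/f)^{|S|}·(1 − 1/f)^{n−|S|}` over the sets `S` in the event) avoids a
fault set `F` of size at most `f` and hits every set `N_j` of size at least
`c·f·ln n` with probability at least `1/4 − n^{1−c}`. -/
theorem stmt_19 (V : Type) [Fintype V] [DecidableEq V]
    (n : ℕ) (hn : Fintype.card V = n) (h2 : 2 ≤ n)
    (f : ℕ) (hf : 2 ≤ f) (c : ℝ) (hc : 0 < c)
    (F : Finset V) (hF : F.card ≤ f)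
    (k : ℕ) (hk : k ≤ n) (N : Fin k → Finset V)
    (hN : ∀ j, c * (f : ℝ) * Real.log n ≤ ((N j).card : ℝ)) :
    (1 : ℝ) / 4 - (n : ℝ) ^ ((1 : ℝ) - c) ≤
      ∑ S ∈ Finset.univ.filter (fun S : Finset V =>
          S ∩ F = ∅ ∧ ∀ j, (S ∩ N j).Nonempty),
        (1 / (f : ℝ)) ^ S.card * (1 - 1 / (f : ℝ)) ^ (n - S.card) := by
  set x : ℝ := 1 / (f : ℝ) with hxdef
  set p : Finset V → ℝ := fun S => x ^ S.card * (1 - x) ^ (n - S.card) with hpdef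
  have hfpos : (0:ℝ) < (f:ℝ) := by positivity
  have hx0 : 0 ≤ x := by positivity
  have hx1 : x ≤ 1 := by
    rw [hxdef, div_le_one hfpos]; exact_mod_cast le_trans (by norm_num) hf
  have hq0 : (0:ℝ) ≤ 1 - x := by linarith
  have hq1 : (1:ℝ) - x ≤ 1 := by linarith
  have hp0 : ∀ S : Finset V, 0 ≤ p S := fun S => by
    simp only [hpdef]; positivity
  have hnpos : (0:ℝ) < (n:ℝ) := by positivity
  -- total mass is 1
  have htot : ∑ S : Finset V, p S = 1 := by
    have h := sum_avoid hn x (∅ : Finset V)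
    simpa using h
  -- avoidance of F
  have hFsum : ∑ S ∈ Finset.univ.filter (fun S : Finset V => S ∩ F = ∅), p S
      = (1 - x) ^ F.card := sum_avoid hn x F
  have hNsum : ∀ j, ∑ S ∈ Finset.univ.filter (fun S : Finset V => S ∩ N j = ∅), p S
      = (1 - x) ^ (N j).card := fun j => sum_avoid hn x (N j)
  -- miss probability bound
  have hmiss : ∀ j : Fin k, (1 - x) ^ (N j).card ≤ (n:ℝ) ^ (-c) := by
    intro j
    have hm := hN j
    have h1 : 1 - x ≤ Real.exp (-x) := by
      have := Real.add_one_le_exp (-x); linarith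
    have h2 : (1 - x) ^ (N j).card ≤ Real.exp (-x) ^ (N j).card :=
      pow_le_pow_left₀ hq0 h1 _
    have h3 : Real.exp (-x) ^ (N j).card = Real.exp (-(((N j).card : ℝ) * x)) := by
      rw [← Real.exp_nat_mul]; ring_nf
    have h4 : -(((N j).card : ℝ) * x) ≤ -(c * Real.log n) := by
      have : c * Real.log n * (f:ℝ) ≤ ((N j).card : ℝ) * 1 := by
        rw [mul_one]; calc c * Real.log n * (f:ℝ) = c * (f:ℝ) * Real.log n := by ring
          _ ≤ _ := hm
      have hxf : x * (f:ℝ) = 1 := by rw [hxdef]; field_simp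
      nlinarith [hfpos]
    have h5 : Real.exp (-(c * Real.log n)) = (n:ℝ) ^ (-c) := by
      rw [Real.rpow_def_of_pos hnpos]; ring_nf
    calc (1 - x) ^ (N j).card ≤ Real.exp (-(((N j).card : ℝ) * x)) := h3 ▸ h2
      _ ≤ Real.exp (-(c * Real.log n)) := Real.exp_le_exp.mpr h4
      _ = (n:ℝ) ^ (-c) := h5
  -- bound on sum over sets hitting F
  have hhitF : ∑ S ∈ Finset.univ.filter (fun S : Finset V => ¬ (S ∩ F = ∅)), p S
      = 1 - (1 - x) ^ F.card := by
    have := Finset.sum_filter_add_sum_filter_not Finset.univ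
      (fun S : Finset V => S ∩ F = ∅) p
    rw [htot, hFsum] at this
    linarith
  -- union bound on missing some N j
  have hmissAll : ∑ S ∈ Finset.univ.filter (fun S : Finset V => ∃ j, S ∩ N j = ∅), p S
      ≤ (n:ℝ) ^ ((1:ℝ) - c) := by
    have step1 : ∑ S ∈ Finset.univ.filter (fun S : Finset V => ∃ j, S ∩ N j = ∅), p S
        ≤ ∑ S ∈ Finset.univ.filter (fun S : Finset V => ∃ j, S ∩ N j = ∅),
            ∑ j : Fin k, (if S ∩ N j = ∅ then p S else 0) := by
      apply Finset.sum_le_sum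
      intro S hS
      obtain ⟨j0, hj0⟩ := (Finset.mem_filter.mp hS).2
      have hle := Finset.single_le_sum
        (f := fun j : Fin k => if S ∩ N j = ∅ then p S else 0)
        (fun j _ => by by_cases h : S ∩ N j = ∅ <;> simp [h, hp0 S]) (Finset.mem_univ j0)
      simpa [hj0] using hle
    have step2 : ∑ S ∈ Finset.univ.filter (fun S : Finset V => ∃ j, S ∩ N j = ∅),
            ∑ j : Fin k, (if S ∩ N j = ∅ then p S else 0)
        ≤ ∑ S : Finset V, ∑ j : Fin k, (if S ∩ N j = ∅ then p S else 0) := by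
      apply Finset.sum_le_sum_of_subset_of_nonneg (Finset.filter_subset _ _)
      intro S _ _
      apply Finset.sum_nonneg
      intro j _
      split
      · exact hp0 S
      · exact le_refl 0
    have step3 : ∑ S : Finset V, ∑ j : Fin k, (if S ∩ N j = ∅ then p S else 0)
        = ∑ j : Fin k, (1 - x) ^ (N j).card := by
      rw [Finset.sum_comm]
      apply Finset.sum_congr rfl
      intro j _
      rw [← Finset.sum_filter, hNsum j]
    have step4 : ∑ j : Fin k, (1 - x) ^ (N j).card ≤ (k:ℝ) * (n:ℝ) ^ (-c) := by
      calc ∑ j : Fin k, (1 - x) ^ (N j).card ≤ ∑ _j : Fin k, (n:ℝ) ^ (-c) :=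
            Finset.sum_le_sum (fun j _ => hmiss j)
        _ = (k:ℝ) * (n:ℝ) ^ (-c) := by simp [mul_comm]
    have step5 : (k:ℝ) * (n:ℝ) ^ (-c) ≤ (n:ℝ) ^ ((1:ℝ) - c) := by
      have hrpow : (n:ℝ) ^ ((1:ℝ) - c) = (n:ℝ) * (n:ℝ) ^ (-c) := by
        rw [sub_eq_add_neg, Real.rpow_add hnpos, Real.rpow_one]
      rw [hrpow]
      have hkn : (k:ℝ) ≤ (n:ℝ) := by exact_mod_cast hk
      exact mul_le_mul_of_nonneg_right hkn (Real.rpow_nonneg hnpos.le _)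
    linarith
  -- combine via union bound
  have hsplit := Finset.sum_filter_add_sum_filter_not Finset.univ
    (fun S : Finset V => S ∩ F = ∅ ∧ ∀ j, (S ∩ N j).Nonempty) p
  rw [htot] at hsplit
  have hsub : Finset.univ.filter (fun S : Finset V =>
        ¬ (S ∩ F = ∅ ∧ ∀ j, (S ∩ N j).Nonempty))
      ⊆ Finset.univ.filter (fun S : Finset V => ¬ (S ∩ F = ∅))
        ∪ Finset.univ.filter (fun S : Finset V => ∃ j, S ∩ N j = ∅) := by
    intro S hS
    simp only [Finset.mem_filter, Finset.mem_univ, true_and, Finset.mem_union] at *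
    by_cases h : S ∩ F = ∅
    · right
      push_neg at hS
      obtain ⟨j, hj⟩ := hS h
      exact ⟨j, hj⟩
    · left; exact h
  have hbadbound : ∑ S ∈ Finset.univ.filter (fun S : Finset V =>
        ¬ (S ∩ F = ∅ ∧ ∀ j, (S ∩ N j).Nonempty)), p S
      ≤ (1 - (1 - x) ^ F.card) + (n:ℝ) ^ ((1:ℝ) - c) := by
    have h1 : ∑ S ∈ Finset.univ.filter (fun S : Finset V =>
          ¬ (S ∩ F = ∅ ∧ ∀ j, (S ∩ N j).Nonempty)), p S
        ≤ ∑ S ∈ (Finset.univ.filter (fun S : Finset V => ¬ (S ∩ F = ∅))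
            ∪ Finset.univ.filter (fun S : Finset V => ∃ j, S ∩ N j = ∅)), p S :=
      Finset.sum_le_sum_of_subset_of_nonneg hsub (fun S _ _ => hp0 S)
    have h2 : ∑ S ∈ (Finset.univ.filter (fun S : Finset V => ¬ (S ∩ F = ∅))
            ∪ Finset.univ.filter (fun S : Finset V => ∃ j, S ∩ N j = ∅)), p S
        ≤ ∑ S ∈ Finset.univ.filter (fun S : Finset V => ¬ (S ∩ F = ∅)), p S
          + ∑ S ∈ Finset.univ.filter (fun S : Finset V => ∃ j, S ∩ N j = ∅), p S := by
      have := Finset.sum_union_inter (s₁ := Finset.univ.filter (fun S : Finset V => ¬ (S ∩ F = ∅)))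
        (s₂ := Finset.univ.filter (fun S : Finset V => ∃ j, S ∩ N j = ∅)) (f := p)
      have hnn : 0 ≤ ∑ S ∈ (Finset.univ.filter (fun S : Finset V => ¬ (S ∩ F = ∅))
          ∩ Finset.univ.filter (fun S : Finset V => ∃ j, S ∩ N j = ∅)), p S :=
        Finset.sum_nonneg (fun S _ => hp0 S)
      linarith
    calc _ ≤ _ := h1
      _ ≤ _ := h2
      _ ≤ (1 - (1 - x) ^ F.card) + (n:ℝ) ^ ((1:ℝ) - c) := by
          rw [hhitF]; linarith [hmissAll]
  -- final numeric bound
  have hqF : (1:ℝ)/4 ≤ (1 - x) ^ F.card := by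
    calc (1:ℝ)/4 ≤ (1 - x) ^ f := quarter_bound f hf
      _ ≤ (1 - x) ^ F.card := pow_le_pow_of_le_one hq0 hq1 hF
  have : ∑ S ∈ Finset.univ.filter (fun S : Finset V =>
      S ∩ F = ∅ ∧ ∀ j, (S ∩ N j).Nonempty), p S
      ≥ (1 - x) ^ F.card - (n:ℝ) ^ ((1:ℝ) - c) := by linarith
  calc (1:ℝ)/4 - (n:ℝ) ^ ((1:ℝ) - c)
      ≤ (1 - x) ^ F.card - (n:ℝ) ^ ((1:ℝ) - c) := by linarith
    _ ≤ _ := this
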